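/- Let Y ⊆ ℝ^d be compact, let μ and ν be Borel probability measures on Y each with full support (support equal to Y), and let ε > 0. Suppose (φ⁰, ψ⁰) and (φ¹, ψ¹) are two pairs of bounded continuous functions Y → ℝ each satisfying the Sinkhorn system: φ(y₀) = ε·log ∫_Y exp((⟨y₀, y₁⟩ − ψ(y₁))/ε) dν(y₁) for all y₀ ∈ Y and ψ(y₁) = ε·log ∫_Y exp((⟨y₀, y₁⟩ − φ(y₀))/ε) dμ(y₀) for all y₁ ∈ Y. Then there exists a constant c ∈ ℝ such that φ¹ = φ⁰ − c and ψ¹ = ψ⁰ + c; consequently φ⁰(y₀) + ψ⁰(y₁) = φ¹(y₀) + ψ¹(y₁) for all (y₀, y₁), and the two Sinkhorn couplings (with densities exp((⟨y₀, y₁⟩ − φⁱ(y₀) − ψⁱ(y₁))/ε) with respect to μ ⊗ ν) coincide. -/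

import Mathlib

open MeasureTheory
open scoped RealInnerProductSpace ENNReal

lemma aux_zero {d : ℕ} {Y : Set (EuclideanSpace ℝ (Fin d))} (hYm : MeasurableSet Y)
    {μ : Measure (EuclideanSpace ℝ (Fin d))} [IsFiniteMeasure μ]
    (hfull : ∀ U : Set (EuclideanSpace ℝ (Fin d)),
      IsOpen U → (U ∩ Y).Nonempty → 0 < μ (U ∩ Y))
    {h : EuclideanSpace ℝ (Fin d) → ℝ} (hcont : ContinuousOn h Y)
    (hnn : ∀ y ∈ Y, 0 ≤ h y) (hint : IntegrableOn h Y μ)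
    (hzero : ∫ y in Y, h y ∂μ = 0) : ∀ y ∈ Y, h y = 0 := by
  intro y hy
  by_contra hne
  have hpos : 0 < h y := lt_of_le_of_ne (hnn y hy) (Ne.symm hne)
  have hev : ∀ᶠ z in nhdsWithin y Y, h y / 2 < h z :=
    (hcont y hy).eventually (eventually_gt_nhds (by linarith))
  obtain ⟨U, hUopen, hyU, hU⟩ := mem_nhdsWithin.mp hev
  have hUYpos := hfull U hUopen ⟨y, hyU, hy⟩
  have hUYm : MeasurableSet (U ∩ Y) := hUopen.measurableSet.inter hYm
  have h1 : h y / 2 * (μ (U ∩ Y)).toReal ≤ ∫ z in U ∩ Y, h z ∂μ :=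
    setIntegral_ge_of_const_le_real hUYm (measure_ne_top _ _)
      (fun z hz => le_of_lt (hU hz)) (hint.mono_set Set.inter_subset_right)
  have h2 : ∫ z in U ∩ Y, h z ∂μ ≤ ∫ z in Y, h z ∂μ :=
    setIntegral_mono_set hint
      ((ae_restrict_iff' hYm).mpr (Filter.Eventually.of_forall hnn))
      (HasSubset.Subset.eventuallyLE Set.inter_subset_right)
  have h3 : 0 < h y / 2 * (μ (U ∩ Y)).toReal :=
    mul_pos (by linarith) (ENNReal.toReal_pos hUYpos.ne' (measure_ne_top _ _))
  linarith [hzero ▸ (h1.trans h2)]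

lemma aux_pos {d : ℕ} {Y : Set (EuclideanSpace ℝ (Fin d))} (hY : IsCompact Y)
    (hYne : Y.Nonempty) {ν : Measure (EuclideanSpace ℝ (Fin d))} [IsProbabilityMeasure ν]
    (hνY : ν Yᶜ = 0) {F : EuclideanSpace ℝ (Fin d) → ℝ} (hF : ContinuousOn F Y)
    (hFpos : ∀ y ∈ Y, 0 < F y) : 0 < ∫ y in Y, F y ∂ν := by
  obtain ⟨z, hz, hmin⟩ := hY.exists_isMinOn hYne hF
  have hYm : MeasurableSet Y := hY.isClosed.measurableSet
  have hνY1 : ν Y = 1 := by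
    have h := measure_add_measure_compl (μ := ν) hYm
    rw [hνY, measure_univ, add_zero] at h; exact h
  have h1 : F z * (ν Y).toReal ≤ ∫ y in Y, F y ∂ν :=
    setIntegral_ge_of_const_le_real hYm (measure_ne_top _ _) (fun x hx => hmin hx)
      (hF.integrableOn_compact hY)
  have h2 : (ν Y).toReal = 1 := by rw [hνY1]; simp
  calc (0:ℝ) < F z * (ν Y).toReal := by rw [h2]; simpa using hFpos z hz
    _ ≤ _ := h1

set_option maxHeartbeats 1600000 in
/-- uniqueness of Sinkhorn potentials: if two pairs of bounded continuous
potentials on a compact `Y ⊆ ℝ^d` both solve the Sinkhorn system for fully supported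
probability measures `μ, ν` on `Y`, then they differ by opposite additive constants;
consequently the sums `φ ⊕ ψ` agree on `Y × Y` and the two Sinkhorn couplings coincide. -/
theorem stmt10 {d : ℕ} (Y : Set (EuclideanSpace ℝ (Fin d))) (hY : IsCompact Y)
    (μ ν : Measure (EuclideanSpace ℝ (Fin d)))
    [IsProbabilityMeasure μ] [IsProbabilityMeasure ν]
    (hμY : μ Yᶜ = 0) (hνY : ν Yᶜ = 0)
    (hμfull : ∀ U : Set (EuclideanSpace ℝ (Fin d)),
      IsOpen U → (U ∩ Y).Nonempty → 0 < μ (U ∩ Y))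
    (hνfull : ∀ U : Set (EuclideanSpace ℝ (Fin d)),
      IsOpen U → (U ∩ Y).Nonempty → 0 < ν (U ∩ Y))
    (ε : ℝ) (hε : 0 < ε)
    (φ0 ψ0 φ1 ψ1 : EuclideanSpace ℝ (Fin d) → ℝ)
    (hφ0 : ContinuousOn φ0 Y) (hψ0 : ContinuousOn ψ0 Y)
    (hφ1 : ContinuousOn φ1 Y) (hψ1 : ContinuousOn ψ1 Y)
    (hS0a : ∀ y₀ ∈ Y, φ0 y₀
      = ε * Real.log (∫ y₁ in Y, Real.exp ((⟪y₀, y₁⟫ - ψ0 y₁) / ε) ∂ν))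
    (hS0b : ∀ y₁ ∈ Y, ψ0 y₁
      = ε * Real.log (∫ y₀ in Y, Real.exp ((⟪y₀, y₁⟫ - φ0 y₀) / ε) ∂μ))
    (hS1a : ∀ y₀ ∈ Y, φ1 y₀
      = ε * Real.log (∫ y₁ in Y, Real.exp ((⟪y₀, y₁⟫ - ψ1 y₁) / ε) ∂ν))
    (hS1b : ∀ y₁ ∈ Y, ψ1 y₁
      = ε * Real.log (∫ y₀ in Y, Real.exp ((⟪y₀, y₁⟫ - φ1 y₀) / ε) ∂μ)) :
    ∃ c : ℝ,
      (∀ y ∈ Y, φ1 y = φ0 y - c) ∧ (∀ y ∈ Y, ψ1 y = ψ0 y + c) ∧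
      (∀ y₀ ∈ Y, ∀ y₁ ∈ Y, φ0 y₀ + ψ0 y₁ = φ1 y₀ + ψ1 y₁) ∧
      (μ.prod ν).withDensity
          (fun p => ENNReal.ofReal (Real.exp ((⟪p.1, p.2⟫ - φ0 p.1 - ψ0 p.2) / ε)))
        = (μ.prod ν).withDensity
          (fun p => ENNReal.ofReal (Real.exp ((⟪p.1, p.2⟫ - φ1 p.1 - ψ1 p.2) / ε))) := by
  classical
  have hεne : ε ≠ 0 := hε.ne'
  have hYm : MeasurableSet Y := hY.isClosed.measurableSet
  have hYne : Y.Nonempty := by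
    by_contra hne
    rw [Set.not_nonempty_iff_eq_empty] at hne
    rw [hne, Set.compl_empty, measure_univ] at hμY
    exact one_ne_zero hμY
  -- continuity of inner products
  have hic1 : ∀ y₀ : EuclideanSpace ℝ (Fin d),
      Continuous fun y₁ : EuclideanSpace ℝ (Fin d) => (⟪y₀, y₁⟫ : ℝ) :=
    fun y₀ => continuous_const.inner continuous_id
  have hic2 : ∀ y₁ : EuclideanSpace ℝ (Fin d),
      Continuous fun y₀ : EuclideanSpace ℝ (Fin d) => (⟪y₀, y₁⟫ : ℝ) :=
    fun y₁ => continuous_id.inner continuous_const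
  -- exponentiated Sinkhorn equations
  have hI0a : ∀ y₀ ∈ Y, ∫ y₁ in Y, Real.exp ((⟪y₀, y₁⟫ - ψ0 y₁) / ε) ∂ν
      = Real.exp (φ0 y₀ / ε) := by
    intro y₀ hy₀
    have hpos : 0 < ∫ y₁ in Y, Real.exp ((⟪y₀, y₁⟫ - ψ0 y₁) / ε) ∂ν :=
      aux_pos hY hYne hνY (Real.continuous_exp.comp_continuousOn
        (((hic1 y₀).continuousOn.sub hψ0).div_const ε)) (fun y _ => Real.exp_pos _)
    rw [hS0a y₀ hy₀, mul_div_cancel_left₀ _ hεne, Real.exp_log hpos]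
  have hI1a : ∀ y₀ ∈ Y, ∫ y₁ in Y, Real.exp ((⟪y₀, y₁⟫ - ψ1 y₁) / ε) ∂ν
      = Real.exp (φ1 y₀ / ε) := by
    intro y₀ hy₀
    have hpos : 0 < ∫ y₁ in Y, Real.exp ((⟪y₀, y₁⟫ - ψ1 y₁) / ε) ∂ν :=
      aux_pos hY hYne hνY (Real.continuous_exp.comp_continuousOn
        (((hic1 y₀).continuousOn.sub hψ1).div_const ε)) (fun y _ => Real.exp_pos _)
    rw [hS1a y₀ hy₀, mul_div_cancel_left₀ _ hεne, Real.exp_log hpos]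
  have hI0b : ∀ y₁ ∈ Y, ∫ y₀ in Y, Real.exp ((⟪y₀, y₁⟫ - φ0 y₀) / ε) ∂μ
      = Real.exp (ψ0 y₁ / ε) := by
    intro y₁ hy₁
    have hpos : 0 < ∫ y₀ in Y, Real.exp ((⟪y₀, y₁⟫ - φ0 y₀) / ε) ∂μ :=
      aux_pos hY hYne hμY (Real.continuous_exp.comp_continuousOn
        (((hic2 y₁).continuousOn.sub hφ0).div_const ε)) (fun y _ => Real.exp_pos _)
    rw [hS0b y₁ hy₁, mul_div_cancel_left₀ _ hεne, Real.exp_log hpos]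
  have hI1b : ∀ y₁ ∈ Y, ∫ y₀ in Y, Real.exp ((⟪y₀, y₁⟫ - φ1 y₀) / ε) ∂μ
      = Real.exp (ψ1 y₁ / ε) := by
    intro y₁ hy₁
    have hpos : 0 < ∫ y₀ in Y, Real.exp ((⟪y₀, y₁⟫ - φ1 y₀) / ε) ∂μ :=
      aux_pos hY hYne hμY (Real.continuous_exp.comp_continuousOn
        (((hic2 y₁).continuousOn.sub hφ1).div_const ε)) (fun y _ => Real.exp_pos _)
    rw [hS1b y₁ hy₁, mul_div_cancel_left₀ _ hεne, Real.exp_log hpos]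
  -- the objects
  set f : EuclideanSpace ℝ (Fin d) → ℝ := fun y => Real.exp ((φ1 y - φ0 y) / ε) with hfdef
  set g : EuclideanSpace ℝ (Fin d) → ℝ := fun y => Real.exp ((ψ0 y - ψ1 y) / ε) with hgdef
  set w : EuclideanSpace ℝ (Fin d) → EuclideanSpace ℝ (Fin d) → ℝ :=
    fun y₀ y₁ => Real.exp ((⟪y₀, y₁⟫ - φ0 y₀ - ψ0 y₁) / ε) with hwdef
  have hfc : ContinuousOn f Y :=
    Real.continuous_exp.comp_continuousOn ((hφ1.sub hφ0).div_const ε)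
  have hgc : ContinuousOn g Y :=
    Real.continuous_exp.comp_continuousOn ((hψ0.sub hψ1).div_const ε)
  have hwc1 : ∀ y₀, ContinuousOn (fun y₁ => w y₀ y₁) Y := fun y₀ =>
    Real.continuous_exp.comp_continuousOn
      ((((hic1 y₀).continuousOn.sub continuousOn_const).sub hψ0).div_const ε)
  have hwc2 : ∀ y₁, ContinuousOn (fun y₀ => w y₀ y₁) Y := fun y₁ =>
    Real.continuous_exp.comp_continuousOn
      ((((hic2 y₁).continuousOn.sub hφ0).sub continuousOn_const).div_const ε)
  -- normalization in y₁
  have hN0ν : ∀ y₀ ∈ Y, ∫ y₁ in Y, w y₀ y₁ ∂ν = 1 := by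
    intro y₀ hy₀
    have hsplit : ∀ y₁, w y₀ y₁
        = Real.exp ((⟪y₀, y₁⟫ - ψ0 y₁) / ε) * Real.exp (-(φ0 y₀) / ε) := by
      intro y₁
      simp only [hwdef]
      rw [← Real.exp_add, ← add_div]
      congr 1 <;> ring_nf
    simp_rw [hsplit]
    rw [integral_mul_const, hI0a y₀ hy₀, ← Real.exp_add, ← add_div]
    simp
  -- normalization in y₀
  have hN0μ : ∀ y₁ ∈ Y, ∫ y₀ in Y, w y₀ y₁ ∂μ = 1 := by
    intro y₁ hy₁
    have hsplit : ∀ y₀, w y₀ y₁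
        = Real.exp ((⟪y₀, y₁⟫ - φ0 y₀) / ε) * Real.exp (-(ψ0 y₁) / ε) := by
      intro y₀
      simp only [hwdef]
      rw [← Real.exp_add, ← add_div]
      congr 1 <;> ring_nf
    simp_rw [hsplit]
    rw [integral_mul_const, hI0b y₁ hy₁, ← Real.exp_add, ← add_div]
    simp
  -- f is the w-average of g
  have hA : ∀ y₀ ∈ Y, ∫ y₁ in Y, w y₀ y₁ * g y₁ ∂ν = f y₀ := by
    intro y₀ hy₀
    have hsplit : ∀ y₁, w y₀ y₁ * g y₁
        = Real.exp ((⟪y₀, y₁⟫ - ψ1 y₁) / ε) * Real.exp (-(φ0 y₀) / ε) := by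
      intro y₁
      simp only [hwdef, hgdef]
      rw [← Real.exp_add, ← Real.exp_add, ← add_div, ← add_div]
      congr 1 <;> ring_nf
    simp_rw [hsplit]
    rw [integral_mul_const, hI1a y₀ hy₀, ← Real.exp_add, ← add_div]
    simp only [hfdef]
    congr 1 <;> ring_nf
  -- 1/g is the w-average of 1/f
  have hB : ∀ y₁ ∈ Y, ∫ y₀ in Y, w y₀ y₁ * (f y₀)⁻¹ ∂μ = (g y₁)⁻¹ := by
    intro y₁ hy₁
    have hsplit : ∀ y₀, w y₀ y₁ * (f y₀)⁻¹
        = Real.exp ((⟪y₀, y₁⟫ - φ1 y₀) / ε) * Real.exp (-(ψ0 y₁) / ε) := by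
      intro y₀
      simp only [hwdef, hfdef]
      rw [← Real.exp_neg, ← Real.exp_add, ← Real.exp_add, ← add_div]
      congr 1; field_simp; ring
    simp_rw [hsplit]
    rw [integral_mul_const, hI1b y₁ hy₁, ← Real.exp_add, ← add_div]
    simp only [hgdef]
    rw [← Real.exp_neg]
    congr 1; field_simp; ring
  -- maximum of g
  obtain ⟨ystar, hystar, hmax⟩ := hY.exists_isMaxOn hYne hgc
  set β : ℝ := g ystar with hβdef
  have hβpos : 0 < β := Real.exp_pos _
  have hfpos : ∀ y, 0 < f y := fun y => Real.exp_pos _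
  -- f ≤ β on Y
  have hfleβ : ∀ y₀ ∈ Y, f y₀ ≤ β := by
    intro y₀ hy₀
    rw [← hA y₀ hy₀]
    have hint1 : IntegrableOn (fun y₁ => w y₀ y₁ * g y₁) Y ν :=
      ((hwc1 y₀).mul hgc).integrableOn_compact hY
    have hint2 : IntegrableOn (fun y₁ => w y₀ y₁ * β) Y ν :=
      ((hwc1 y₀).mul continuousOn_const).integrableOn_compact hY
    calc ∫ y₁ in Y, w y₀ y₁ * g y₁ ∂ν ≤ ∫ y₁ in Y, w y₀ y₁ * β ∂ν := by
          refine setIntegral_mono_on hint1 hint2 hYm fun y₁ hy₁ => ?_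
          exact mul_le_mul_of_nonneg_left (hmax hy₁) (Real.exp_pos _).le
      _ = β := by rw [integral_mul_const, hN0ν y₀ hy₀, one_mul]
  -- the nonnegative function with zero integral
  set h : EuclideanSpace ℝ (Fin d) → ℝ :=
    fun y₀ => w y₀ ystar * ((f y₀)⁻¹ - β⁻¹) with hhdef
  have hhc : ContinuousOn h Y :=
    (hwc2 ystar).mul ((hfc.inv₀ fun y _ => (hfpos y).ne').sub continuousOn_const)
  have hhnn : ∀ y ∈ Y, 0 ≤ h y := by
    intro y hy
    have h1 : β⁻¹ ≤ (f y)⁻¹ := by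
      apply inv_anti₀ (hfpos y) (hfleβ y hy)
    exact mul_nonneg (Real.exp_pos _).le (by linarith)
  have hhint : IntegrableOn h Y μ := hhc.integrableOn_compact hY
  have hhzero : ∫ y in Y, h y ∂μ = 0 := by
    have hintA : IntegrableOn (fun y₀ => w y₀ ystar * (f y₀)⁻¹) Y μ :=
      ((hwc2 ystar).mul (hfc.inv₀ fun y _ => (hfpos y).ne')).integrableOn_compact hY
    have hintB : IntegrableOn (fun y₀ => w y₀ ystar * β⁻¹) Y μ :=
      ((hwc2 ystar).mul continuousOn_const).integrableOn_compact hY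
    have hsplit : ∀ y₀, h y₀ = w y₀ ystar * (f y₀)⁻¹ - w y₀ ystar * β⁻¹ := by
      intro y₀; simp only [hhdef]; ring
    simp_rw [hsplit]
    rw [integral_sub hintA hintB, hB ystar hystar, integral_mul_const,
      hN0μ ystar hystar, one_mul, sub_eq_zero]
  have hfβ : ∀ y ∈ Y, f y = β := by
    intro y hy
    have h0 : h y = 0 := aux_zero hYm hμfull hhc hhnn hhint hhzero y hy
    simp only [hhdef] at h0
    have hw0 : w y ystar ≠ 0 := (Real.exp_pos _).ne'
    have : (f y)⁻¹ - β⁻¹ = 0 := by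
      rcases mul_eq_zero.mp h0 with h' | h'
      · exact absurd h' hw0
      · exact h'
    have h2 : (f y)⁻¹ = β⁻¹ := by linarith
    exact inv_injective h2
  -- then g is constant β on Y
  have hgβ : ∀ y ∈ Y, g y = β := by
    intro y₁ hy₁
    have h1 : ∫ y₀ in Y, w y₀ y₁ * (f y₀)⁻¹ ∂μ = ∫ y₀ in Y, w y₀ y₁ * β⁻¹ ∂μ := by
      refine setIntegral_congr_fun hYm fun y₀ hy₀ => ?_
      rw [hfβ y₀ hy₀]
    have h2 : (g y₁)⁻¹ = β⁻¹ := by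
      rw [← hB y₁ hy₁, h1, integral_mul_const, hN0μ y₁ hy₁, one_mul]
    exact inv_injective h2
  -- the constant
  have hlogβ : ε * Real.log β = ψ0 ystar - ψ1 ystar := by
    simp only [hβdef, hgdef, Real.log_exp]
    field_simp
  have hc3 : ∀ y ∈ Y, φ1 y - φ0 y = ε * Real.log β := by
    intro y hy
    have h1 := congrArg Real.log (hfβ y hy)
    simp only [hfdef, hβdef, hgdef, Real.log_exp] at h1
    rw [hlogβ]
    field_simp at h1
    linarith
  have hc4 : ∀ y ∈ Y, ψ0 y - ψ1 y = ε * Real.log β := by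
    intro y hy
    have h1 := congrArg Real.log (hgβ y hy)
    simp only [hgdef, hβdef, Real.log_exp] at h1
    rw [hlogβ]
    field_simp at h1
    linarith
  have hsum : ∀ y₀ ∈ Y, ∀ y₁ ∈ Y, φ0 y₀ + ψ0 y₁ = φ1 y₀ + ψ1 y₁ := by
    intro y₀ h0 y₁ h1
    linarith [hc3 y₀ h0, hc4 y₁ h1]
  have h1p : (μ.prod ν) (Yᶜ ×ˢ (Set.univ : Set (EuclideanSpace ℝ (Fin d)))) = 0 := by
    rw [Measure.prod_prod, hμY, zero_mul]
  have h2p : (μ.prod ν) ((Set.univ : Set (EuclideanSpace ℝ (Fin d))) ×ˢ Yᶜ) = 0 := by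
    rw [Measure.prod_prod, hνY, mul_zero]
  have hcompl : (μ.prod ν) (Y ×ˢ Y)ᶜ = 0 := by
    rw [Set.compl_prod_eq_union]
    exact measure_union_null h1p h2p
  have haem : ∀ᵐ p ∂(μ.prod ν), p ∈ Y ×ˢ Y := by
    rw [MeasureTheory.ae_iff]
    exact hcompl
  refine ⟨-(ε * Real.log β), fun y hy => by linarith [hc3 y hy],
    fun y hy => by linarith [hc4 y hy], hsum, ?_⟩
  refine withDensity_congr_ae ?_
  filter_upwards [haem] with p hp
  have h := hsum p.1 hp.1 p.2 hp.2
  have hxy : ⟪p.1, p.2⟫ - φ0 p.1 - ψ0 p.2 = ⟪p.1, p.2⟫ - φ1 p.1 - ψ1 p.2 := by linarith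
  rw [hxy]
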